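/- (Newton's equations are Lagrange's equations, d = 0, b ≠ 0) Let a ≠ 0, b ≠ 0, c ≠ 0 and L(q1, q2, q̇1, q̇2) = (a/4)q̇1² + ((c/b)q̇2 − (a/(4b²))q̇2²)e^{−a q1}. A twice-differentiable curve (q1(t), q2(t)) satisfies the Euler–Lagrange equations d/dt(∂L/∂q̇1) − ∂L/∂q1 = 0 and d/dt(∂L/∂q̇2) − ∂L/∂q2 = 0 if and only if it satisfies Newton's equations q̈1 − (a/(2b²))e^{−a q1} q̇2² + (2c/b)e^{−a q1} q̇2 = 0 and q̈2 − a q̇1 q̇2 + 2bc q̇1 = 0. -/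

import Mathlib

/-- The Lagrangian `L(q₁,q₂,q̇₁,q̇₂) = (a/4)q̇₁² + ((c/b)q̇₂ − (a/(4b²))q̇₂²)e^{−aq₁}`,
as a function of `(v 0, v 1, v 2, v 3) = (q₁, q₂, q̇₁, q̇₂)`. -/
noncomputable def lagrangianD0 (a b c : ℝ) : (Fin 4 → ℝ) → ℝ :=
  fun v => a / 4 * (v 2) ^ 2
    + (c / b * v 3 - a / (4 * b ^ 2) * (v 3) ^ 2) * Real.exp (-a * v 0)

lemma lagD0_hasFDerivAt (a b c : ℝ) (x : Fin 4 → ℝ) :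
    HasFDerivAt (lagrangianD0 a b c)
      (((-a * (c / b * x 3 - a / (4 * b ^ 2) * (x 3) ^ 2)) * Real.exp (-a * x 0)) •
          (ContinuousLinearMap.proj (R := ℝ) (φ := fun _ : Fin 4 => ℝ) 0)
        + (a / 2 * x 2) • (ContinuousLinearMap.proj (R := ℝ) (φ := fun _ : Fin 4 => ℝ) 2)
        + ((c / b - a / (2 * b ^ 2) * x 3) * Real.exp (-a * x 0)) •
          (ContinuousLinearMap.proj (R := ℝ) (φ := fun _ : Fin 4 => ℝ) 3)) x := by
  have h0 : HasFDerivAt (fun v : Fin 4 → ℝ => v 0)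
      (ContinuousLinearMap.proj (R := ℝ) (φ := fun _ : Fin 4 => ℝ) 0) x :=
    hasFDerivAt_apply 0 x
  have h2 : HasFDerivAt (fun v : Fin 4 → ℝ => v 2)
      (ContinuousLinearMap.proj (R := ℝ) (φ := fun _ : Fin 4 => ℝ) 2) x :=
    hasFDerivAt_apply 2 x
  have h3 : HasFDerivAt (fun v : Fin 4 → ℝ => v 3)
      (ContinuousLinearMap.proj (R := ℝ) (φ := fun _ : Fin 4 => ℝ) 3) x :=
    hasFDerivAt_apply 3 x
  have hA := (h2.mul h2).const_mul (a / 4)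
  have hB := (h3.const_mul (c / b)).sub ((h3.mul h3).const_mul (a / (4 * b ^ 2)))
  have hE := (h0.const_mul (-a)).exp
  have hL := hA.add (hB.mul hE)
  have hfun : lagrangianD0 a b c = fun v : Fin 4 → ℝ =>
      a / 4 * (v 2 * v 2)
        + (c / b * v 3 - a / (4 * b ^ 2) * (v 3 * v 3)) * Real.exp (-a * v 0) := by
    funext v; simp [lagrangianD0]; ring
  rw [hfun]
  refine HasFDerivAt.congr_fderiv hL ?_
  ext v
  simp [ContinuousLinearMap.proj]
  ring

lemma lagD0_eval0 (a b c : ℝ) (x : Fin 4 → ℝ) :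
    fderiv ℝ (lagrangianD0 a b c) x (Pi.single 0 1)
      = -a * (c / b * x 3 - a / (4 * b ^ 2) * (x 3) ^ 2) * Real.exp (-a * x 0) := by
  rw [(lagD0_hasFDerivAt a b c x).fderiv]
  simp [Pi.single_apply]

lemma lagD0_eval1 (a b c : ℝ) (x : Fin 4 → ℝ) :
    fderiv ℝ (lagrangianD0 a b c) x (Pi.single 1 1) = 0 := by
  rw [(lagD0_hasFDerivAt a b c x).fderiv]
  simp [Pi.single_apply]

lemma lagD0_eval2 (a b c : ℝ) (x : Fin 4 → ℝ) :
    fderiv ℝ (lagrangianD0 a b c) x (Pi.single 2 1) = a / 2 * x 2 := by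
  rw [(lagD0_hasFDerivAt a b c x).fderiv]
  simp [Pi.single_apply]

lemma lagD0_eval3 (a b c : ℝ) (x : Fin 4 → ℝ) :
    fderiv ℝ (lagrangianD0 a b c) x (Pi.single 3 1)
      = (c / b - a / (2 * b ^ 2) * x 3) * Real.exp (-a * x 0) := by
  rw [(lagD0_hasFDerivAt a b c x).fderiv]
  simp [Pi.single_apply]

/-- Newton's equations for `d = 0`, `b ≠ 0` are the Euler–Lagrange equations of
`L = (a/4)q̇₁² + ((c/b)q̇₂ − (a/(4b²))q̇₂²)e^{−aq₁}`: a twice-differentiable curve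
satisfies `d/dt(∂L/∂q̇ᵢ) = ∂L/∂qᵢ` for `i = 1,2` iff it satisfies
`q̈₁ − (a/(2b²))e^{−aq₁}q̇₂² + (2c/b)e^{−aq₁}q̇₂ = 0` and
`q̈₂ − aq̇₁q̇₂ + 2bcq̇₁ = 0`. -/
theorem euler_lagrange_iff_newton (a b c : ℝ) (ha : a ≠ 0) (hb : b ≠ 0) (hc : c ≠ 0)
    (q₁ q₂ q₁' q₂' q₁'' q₂'' : ℝ → ℝ)
    (hq₁ : ∀ t, HasDerivAt q₁ (q₁' t) t) (hq₂ : ∀ t, HasDerivAt q₂ (q₂' t) t)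
    (hq₁' : ∀ t, HasDerivAt q₁' (q₁'' t) t) (hq₂' : ∀ t, HasDerivAt q₂' (q₂'' t) t) :
    ((∀ t, deriv (fun s => fderiv ℝ (lagrangianD0 a b c)
            ![q₁ s, q₂ s, q₁' s, q₂' s] (Pi.single 2 1)) t
          = fderiv ℝ (lagrangianD0 a b c) ![q₁ t, q₂ t, q₁' t, q₂' t] (Pi.single 0 1))
      ∧ (∀ t, deriv (fun s => fderiv ℝ (lagrangianD0 a b c)
            ![q₁ s, q₂ s, q₁' s, q₂' s] (Pi.single 3 1)) t
          = fderiv ℝ (lagrangianD0 a b c) ![q₁ t, q₂ t, q₁' t, q₂' t] (Pi.single 1 1)))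
    ↔ ((∀ t, q₁'' t - a / (2 * b ^ 2) * Real.exp (-a * q₁ t) * (q₂' t) ^ 2
              + 2 * c / b * Real.exp (-a * q₁ t) * q₂' t = 0)
      ∧ (∀ t, q₂'' t - a * q₁' t * q₂' t + 2 * b * c * q₁' t = 0)) := by
  have hx0 : ∀ s, (![q₁ s, q₂ s, q₁' s, q₂' s] : Fin 4 → ℝ) 0 = q₁ s := fun s => rfl
  have hx2 : ∀ s, (![q₁ s, q₂ s, q₁' s, q₂' s] : Fin 4 → ℝ) 2 = q₁' s := fun s => rfl
  have hx3 : ∀ s, (![q₁ s, q₂ s, q₁' s, q₂' s] : Fin 4 → ℝ) 3 = q₂' s := fun s => rfl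
  have hF2 : (fun s => fderiv ℝ (lagrangianD0 a b c)
      ![q₁ s, q₂ s, q₁' s, q₂' s] (Pi.single 2 1)) = fun s => a / 2 * q₁' s := by
    funext s; rw [lagD0_eval2, hx2]
  have hF3 : (fun s => fderiv ℝ (lagrangianD0 a b c)
      ![q₁ s, q₂ s, q₁' s, q₂' s] (Pi.single 3 1))
      = fun s => (c / b - a / (2 * b ^ 2) * q₂' s) * Real.exp (-a * q₁ s) := by
    funext s; rw [lagD0_eval3, hx3, hx0]
  have hd2 : ∀ t, deriv (fun s => fderiv ℝ (lagrangianD0 a b c)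
      ![q₁ s, q₂ s, q₁' s, q₂' s] (Pi.single 2 1)) t = a / 2 * q₁'' t := by
    intro t; rw [hF2]; exact ((hq₁' t).const_mul (a / 2)).deriv
  have hd3 : ∀ t, deriv (fun s => fderiv ℝ (lagrangianD0 a b c)
      ![q₁ s, q₂ s, q₁' s, q₂' s] (Pi.single 3 1)) t
      = -(a / (2 * b ^ 2) * q₂'' t) * Real.exp (-a * q₁ t)
        + (c / b - a / (2 * b ^ 2) * q₂' t) * (Real.exp (-a * q₁ t) * (-a * q₁' t)) := by
    intro t; rw [hF3]
    exact ((((hq₂' t).const_mul (a / (2 * b ^ 2))).const_sub (c / b)).mul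
      (((hq₁ t).const_mul (-a)).exp)).deriv
  constructor
  · rintro ⟨h1, h2⟩
    constructor
    · intro t
      have h := h1 t
      rw [hd2 t, lagD0_eval0, hx0, hx3] at h
      simp only [neg_mul] at h ⊢
      field_simp at h ⊢
      refine mul_left_cancel₀ ha ?_
      linear_combination a * h / 2
    · intro t
      have h := h2 t
      rw [hd3 t, lagD0_eval1] at h
      have h' : (-(a / (2 * b ^ 2) * q₂'' t)
          + (c / b - a / (2 * b ^ 2) * q₂' t) * (-a * q₁' t)) * Real.exp (-a * q₁ t) = 0 := by
        linear_combination h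
      have h'' := (mul_eq_zero.mp h').resolve_right (Real.exp_ne_zero _)
      field_simp at h''
      refine mul_left_cancel₀ (show (-(2 * a * b ^ 3) : ℝ) ≠ 0 by
        simp [ha, hb, pow_ne_zero]) ?_
      linear_combination 2 * b ^ 3 * h''
  · rintro ⟨h1, h2⟩
    constructor
    · intro t
      rw [hd2 t, lagD0_eval0, hx0, hx3]
      have h := h1 t
      simp only [neg_mul] at h ⊢
      field_simp at h ⊢
      linear_combination 2 * h
    · intro t
      rw [hd3 t, lagD0_eval1]
      have h := h2 t
      simp only [neg_mul]
      field_simp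
      linear_combination (-a * Real.exp (-(a * q₁ t))) * h
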